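/- The skew-symmetric bilinear map φ_3 on h_2 defined by φ_3(e_1,e_4) = e_1, φ_3(e_2,e_4) = e_2, φ_3(e_3,e_4) = e_3, φ_3(e_4,e_5) = −2e_5, and zero otherwise, is a 2-cocycle of h_2 with adjoint coefficients, and moreover the bracket [x,y]_t = [x,y] + t φ_3(x,y) satisfies the Jacobi identity for every scalar t (i.e., it defines a genuine one-parameter family of Lie algebra structures). -/
import Mathlib


noncomputable section

/-- The underlying space of the 5-dimensional Heisenberg Lie algebra `h₂`. -/
abbrev V : Type := Fin 5 → ℝ

/-- Basis vectors: `e 0, …, e 4` are `e₁, …, e₅`. -/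
def e (i : Fin 5) : V := Pi.single i 1

/-- The Heisenberg bracket on `h₂`: `[e₁,e₃] = e₅`, `[e₂,e₄] = e₅`. -/
def br (x y : V) : V :=
  (x 0 * y 2 - x 2 * y 0 + x 1 * y 3 - x 3 * y 1) • e 4

/-- The deformed bracket `[x,y]_t = [x,y] + t • φ x y`. -/
def brt (t : ℝ) (φ : V → V → V) (x y : V) : V := br x y + t • φ x y

/-- The Chevalley–Eilenberg 2-cocycle condition (adjoint coefficients) for a
skew-symmetric 2-cochain `φ` on `h₂`. -/
def IsCocycle (φ : V → V → V) : Prop :=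
  ∀ x y z : V,
    φ (br x y) z - φ (br x z) y + φ (br y z) x
      - br x (φ y z) + br y (φ x z) - br z (φ x y) = 0

/-- `φ₃(e₁,e₄) = e₁`, `φ₃(e₂,e₄) = e₂`, `φ₃(e₃,e₄) = e₃`, `φ₃(e₄,e₅) = −2e₅`, zero otherwise. -/
def phi3 (x y : V) : V :=
  (x 0 * y 3 - x 3 * y 0) • e 0
  + (x 1 * y 3 - x 3 * y 1) • e 1
  + (x 2 * y 3 - x 3 * y 2) • e 2
  + (x 3 * y 4 - x 4 * y 3) • ((-2:ℝ) • e 4)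

set_option maxHeartbeats 2000000 in
/-- `φ₃` is a 2-cocycle, and `[x,y]_t = [x,y] + t φ₃(x,y)` satisfies the Jacobi
identity for every scalar `t`. -/
theorem phi3_cocycle_and_jacobi :
    IsCocycle phi3 ∧
      ∀ (t : ℝ) (x y z : V),
        brt t phi3 x (brt t phi3 y z) + brt t phi3 y (brt t phi3 z x)
          + brt t phi3 z (brt t phi3 x y) = 0 := by
  constructor
  · intro x y z
    funext i
    fin_cases i <;>
      simp [IsCocycle, phi3, br, brt, e, Pi.single_apply, Pi.add_apply, Pi.smul_apply,
        smul_eq_mul] <;> ring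
  · intro t x y z
    funext i
    fin_cases i <;>
      simp [phi3, br, brt, e, Pi.single_apply, Pi.add_apply, Pi.smul_apply,
        smul_eq_mul] <;> ring

end
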